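/- Let T be a pruned tree of sequences and ξ an inductive probability measure on T, and let λ^ξ be the unique Borel probability measure on lim T with λ^ξ([t]) = ξ(t) for all t ∈ T. Let S ⊆ T be a set that is itself a pruned tree of sequences (nonempty, closed under prefixes, and every element of S has a successor in S). Then λ^ξ(lim S) = ⨅_{n ∈ ℕ} ∑' over t ∈ Lv_n(S) of ξ(t), where lim S ⊆ lim T is the (closed) set of infinite branches of S. -/

import Mathlib

open scoped ENNReal
open MeasureTheory

noncomputable section

/-- A tree of sequences: a nonempty set of finite lists of naturals closed under prefixes. -/
def IsTree (T : Set (List ℕ)) : Prop :=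
  T.Nonempty ∧ ∀ s t : List ℕ, s <+: t → t ∈ T → s ∈ T

/-- `t` is a maximal node of `T`: it has no successor in `T`. -/
def IsMaxNode (T : Set (List ℕ)) (t : List ℕ) : Prop :=
  ∀ k : ℕ, t ++ [k] ∉ T

/-- A probability tree on `T`. -/
def IsProbTree (T : Set (List ℕ)) (p : List ℕ → ℕ → ℝ≥0∞) : Prop :=
  ∀ t ∈ T, ¬ IsMaxNode T t →
    (∀ k : ℕ, t ++ [k] ∉ T → p t k = 0) ∧ (∑' k : ℕ, p t k = 1)

/-- The measure induced by a probability tree: `Ξ_p(t) = ∏_{i<|t|} p (t↾i) (t i)`. -/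
def Xi (p : List ℕ → ℕ → ℝ≥0∞) (t : List ℕ) : ℝ≥0∞ :=
  ∏ i ∈ Finset.range t.length, p (t.take i) (t.getD i 0)

/-- An inductive probability measure on `T`. -/
def IsIPM (T : Set (List ℕ)) (ξ : List ℕ → ℝ≥0∞) : Prop :=
  ξ [] = 1 ∧ ∀ t ∈ T, ¬ IsMaxNode T t →
    ξ t = ∑' k : {k : ℕ // t ++ [k] ∈ T}, ξ (t ++ [k.1])

/-- The set of infinite branches of `T`. -/
def limT (T : Set (List ℕ)) : Set (ℕ → ℕ) :=
  {x | ∀ n : ℕ, (List.range n).map x ∈ T}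

/-- `T` is pruned: every node has a successor in `T`. -/
def Pruned (T : Set (List ℕ)) : Prop := ∀ t ∈ T, ∃ k : ℕ, t ++ [k] ∈ T

/-- The basic clopen set `[t]` of branches through `t`. -/
def cyl (T : Set (List ℕ)) (t : List ℕ) : Set ↥(limT T) :=
  {x | (List.range t.length).map x.1 = t}

lemma cyl_meas (T : Set (List ℕ)) (t : List ℕ) : MeasurableSet (cyl T t) := by
  have : cyl T t = ⋂ i ∈ Finset.range t.length, {x : ↥(limT T) | x.1 i = t.getD i 0} := by
    ext x
    simp only [cyl, Set.mem_setOf_eq, Set.mem_iInter, Finset.mem_range]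
    constructor
    · intro h i hi
      have : (List.map x.1 (List.range t.length)).getD i 0 = t.getD i 0 := by rw [h]
      simpa [List.getD_eq_getElem?_getD, List.getElem?_map, List.getElem?_range, hi] using this
    · intro h
      apply List.ext_getElem
      · simp
      · intro i hi1 hi2
        have := h i hi2
        simp only [List.getD_eq_getElem?_getD, List.getElem?_eq_getElem hi2,
          Option.getD_some] at this
        simpa using this
  rw [this]
  exact MeasurableSet.biInter (Finset.range t.length).countable_toSet fun i _ =>
    (measurable_pi_apply i).comp measurable_subtype_coe (measurableSet_singleton _)

theorem stmt11 (T S : Set (List ℕ)) (ξ : List ℕ → ℝ≥0∞)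
    (hT : IsTree T) (hpr : Pruned T) (hξ : IsIPM T ξ)
    (hST : S ⊆ T) (hS : IsTree S) (hSpr : Pruned S)
    (lam : Measure ↥(limT T)) (hlam : IsProbabilityMeasure lam)
    (hcyl : ∀ t ∈ T, lam (cyl T t) = ξ t) :
    lam {x : ↥(limT T) | ∀ n : ℕ, (List.range n).map x.1 ∈ S}
      = ⨅ n : ℕ, ∑' t : {t : List ℕ // t ∈ S ∧ t.length = n}, ξ t.1 := by
  set A : ℕ → Set ↥(limT T) := fun n => {x | (List.range n).map x.1 ∈ S} with hA
  have hAU : ∀ n, A n = ⋃ t : {t : List ℕ // t ∈ S ∧ t.length = n}, cyl T t.1 := by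
    intro n
    ext x
    simp only [hA, Set.mem_setOf_eq, Set.mem_iUnion, cyl]
    constructor
    · intro h
      exact ⟨⟨(List.range n).map x.1, h, by simp⟩, by simp⟩
    · rintro ⟨⟨t, ht, rfl⟩, hx⟩
      simpa [hx] using ht
  have hAmeas : ∀ n, MeasurableSet (A n) := fun n => by
    rw [hAU n]; exact MeasurableSet.iUnion fun t => cyl_meas T t.1
  have hAm : ∀ n, lam (A n) = ∑' t : {t : List ℕ // t ∈ S ∧ t.length = n}, ξ t.1 := by
    intro n
    rw [hAU n, measure_iUnion]
    · exact tsum_congr fun t => hcyl t.1 (hST t.2.1)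
    · rintro ⟨t, ht, htl⟩ ⟨s, hs, hsl⟩ hne
      simp only [Function.onFun]
      apply Set.disjoint_left.2
      intro x hx hx'
      simp only [cyl, Set.mem_setOf_eq] at hx hx'
      rw [htl] at hx
      rw [hsl] at hx'
      exact hne (Subtype.ext (hx.symm.trans hx'))
    · exact fun t => cyl_meas T t.1
  have hanti : Antitone A := by
    apply antitone_nat_of_succ_le
    intro n x hx
    have hpre : (List.range n).map x.1 <+: (List.range (n+1)).map x.1 := by
      apply List.IsPrefix.map
      rw [List.range_succ]
      exact ⟨[n], rfl⟩
    exact hS.2 _ _ hpre hx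
  have hset : {x : ↥(limT T) | ∀ n : ℕ, (List.range n).map x.1 ∈ S} = ⋂ n, A n := by
    ext x; simp [hA]
  rw [hset, Directed.measure_iInter (fun n => (hAmeas n).nullMeasurableSet) hanti.directed_ge ⟨0, measure_ne_top _ _⟩]
  exact iInf_congr hAm
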